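/- On a fermionic Fock space with flavors α₁,…,α_N (N ≥ 2) and sites j ∈ {1,…,L}, define the η-pairing operator η†_{mn} = Σ_j (−1)^j c†_{j,α_m} c†_{j,α_n} for m ≠ n. Then for the SU(N) Hubbard Hamiltonian H = H_hop + H_int with H_hop = −J Σ_j Σ_n (c†_{j,α_n} c_{j+1,α_n} + h.c.) (periodic boundary conditions, L even) and H_int = (U/2) Σ_j Σ_{n≠m} n_{j,α_m} n_{j,α_n}, one has [H_hop, η†_{mn}] = 0 and [H_int, η†_{mn}] = U η†_{mn} + (terms that annihilate the vacuum); consequently the commutator [H, η†_{1n}] acting on any state of the form Π_{n'}(η†_{1n'})^{m_{n'}}|vac⟩ equals U η†_{1n} applied to that state. -/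

import Mathlib

section
variable {V : Type*} [AddCommGroup V] [Module ℂ V] {L N : ℕ}
variable (c cd : Fin L → Fin N → Module.End ℂ V)

lemma eta_hdd (car_dd : ∀ j k a b, cd j a * cd k b + cd k b * cd j a = 0)
    (j k : Fin L) (a b : Fin N) : cd j a * cd k b = -(cd k b * cd j a) :=
  eq_neg_of_add_eq_zero_left (car_dd j k a b)

lemma eta_hdd0 (car_dd : ∀ j k a b, cd j a * cd k b + cd k b * cd j a = 0)
    (j : Fin L) (a : Fin N) : cd j a * cd j a = 0 := by
  have h2 : (2 : ℂ) • (cd j a * cd j a) = 0 := by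
    rw [two_smul]; exact car_dd j j a a
  calc cd j a * cd j a = (2:ℂ)⁻¹ • ((2:ℂ) • (cd j a * cd j a)) := by
        rw [smul_smul]; norm_num
    _ = 0 := by rw [h2, smul_zero]

lemma eta_hcd (car_cd : ∀ j k a b,
      c j a * cd k b + cd k b * c j a = if j = k ∧ a = b then 1 else 0)
    (j k : Fin L) (a b : Fin N) :
    c j a * cd k b = (if j = k ∧ a = b then (1 : Module.End ℂ V) else 0) - cd k b * c j a :=
  eq_sub_of_add_eq (car_cd j k a b)

lemma eta_pairD (car_dd : ∀ j k a b, cd j a * cd k b + cd k b * cd j a = 0)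
    (p l : Fin L) (q m n : Fin N) :
    cd p q * (cd l m * cd l n) = (cd l m * cd l n) * cd p q := by
  rw [← mul_assoc, eta_hdd cd car_dd p l q m, neg_mul, mul_assoc,
    eta_hdd cd car_dd p l q n, mul_neg, neg_neg, ← mul_assoc]

lemma eta_cX (car_cd : ∀ j k a b,
      c j a * cd k b + cd k b * c j a = if j = k ∧ a = b then 1 else 0)
    (q l : Fin L) (a m n : Fin N) :
    c q a * (cd l m * cd l n) =
      (if q = l ∧ a = m then (1:ℂ) else 0) • cd l n
      - (if q = l ∧ a = n then (1:ℂ) else 0) • cd l m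
      + (cd l m * cd l n) * c q a := by
  rw [← mul_assoc, eta_hcd c cd car_cd q l a m, sub_mul, mul_assoc,
    eta_hcd c cd car_cd q l a n, mul_sub]
  split_ifs <;> simp <;> noncomm_ring

lemma eta_nX (car_dd : ∀ j k a b, cd j a * cd k b + cd k b * cd j a = 0)
    (car_cd : ∀ j k a b,
      c j a * cd k b + cd k b * c j a = if j = k ∧ a = b then 1 else 0)
    (j l : Fin L) (a m n : Fin N) :
    (cd j a * c j a) * (cd l m * cd l n) =
      (cd l m * cd l n) * (cd j a * c j a)
      + ((if j = l ∧ a = m then (1:ℂ) else 0) + (if j = l ∧ a = n then (1:ℂ) else 0))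
          • (cd l m * cd l n) := by
  rw [mul_assoc, eta_cX c cd car_cd j l a m n]
  have hp : cd j a * ((cd l m * cd l n) * c j a) = (cd l m * cd l n) * (cd j a * c j a) := by
    rw [← mul_assoc, eta_pairD cd car_dd j l a m n, mul_assoc]
  by_cases h1 : j = l ∧ a = m
  · by_cases h2 : j = l ∧ a = n
    · obtain ⟨rfl, rfl⟩ := h1
      obtain ⟨-, rfl⟩ := h2
      simp [eta_hdd0 cd car_dd, mul_add, mul_sub, hp]
    · obtain ⟨rfl, rfl⟩ := h1
      have han : a ≠ n := fun h => h2 ⟨rfl, h⟩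
      simp only [and_self, if_pos, true_and, if_neg han, one_smul, zero_smul, sub_zero,
        mul_add, hp]
      rw [add_zero, one_smul]; abel
  · by_cases h2 : j = l ∧ a = n
    · obtain ⟨rfl, rfl⟩ := h2
      have ham : a ≠ m := fun h => h1 ⟨rfl, h⟩
      simp only [and_self, if_pos, true_and, if_neg ham, one_smul, zero_smul, zero_sub,
        mul_add, mul_neg, hp]
      rw [eta_hdd cd car_dd j j a m]
      rw [zero_add, one_smul]; abel
    · simp only [if_neg h1, if_neg h2, zero_smul, sub_zero, zero_add, add_zero, mul_add, hp]

lemma eta_sign {L : ℕ} [NeZero L] (hL : Even L) (j : Fin L) :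
    ((-1 : ℂ)) ^ (((j + 1 : Fin L)) : ℕ) = -(-1 : ℂ) ^ ((j : ℕ)) := by
  have hL2 : 2 ≤ L := by
    rcases hL with ⟨t, ht⟩
    rcases Nat.eq_zero_or_pos t with h | h
    · exact absurd (by omega : L = 0) (NeZero.ne L)
    · omega
  have hmod : ∀ x : ℕ, (-1 : ℂ) ^ (x % L) = (-1 : ℂ) ^ x := by
    intro x
    conv_rhs => rw [← Nat.mod_add_div x L]
    rw [pow_add, pow_mul, hL.neg_one_pow, one_pow, mul_one]
  have hv : ((j + 1 : Fin L) : ℕ) = ((j : ℕ) + 1) % L := by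
    rw [Fin.add_def]
    simp [Fin.val_one', Nat.mod_eq_of_lt (by omega : 1 < L)]
  rw [hv, hmod, pow_succ, mul_neg_one]

end

section
variable {V : Type*} [AddCommGroup V] [Module ℂ V] {L N : ℕ}
variable (c cd : Fin L → Fin N → Module.End ℂ V)

-- commutator of a number operator with η
lemma eta_Ncomm (car_dd : ∀ j k a b, cd j a * cd k b + cd k b * cd j a = 0)
    (car_cd : ∀ j k a b,
      c j a * cd k b + cd k b * c j a = if j = k ∧ a = b then 1 else 0)
    (j : Fin L) (a m n : Fin N) :
    (cd j a * c j a) * (∑ l : Fin L, ((-1:ℂ)^(l:ℕ)) • (cd l m * cd l n))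
      = (∑ l : Fin L, ((-1:ℂ)^(l:ℕ)) • (cd l m * cd l n)) * (cd j a * c j a)
        + (((if a = m then (1:ℂ) else 0) + (if a = n then (1:ℂ) else 0)) * (-1:ℂ)^(j:ℕ))
            • (cd j m * cd j n) := by
  have key : ∀ l : Fin L,
      (cd j a * c j a) * (((-1:ℂ)^(l:ℕ)) • (cd l m * cd l n))
      = (((-1:ℂ)^(l:ℕ)) • (cd l m * cd l n)) * (cd j a * c j a)
        + (if l = j then
            (((if a = m then (1:ℂ) else 0) + (if a = n then (1:ℂ) else 0)) * (-1:ℂ)^(j:ℕ))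
              • (cd j m * cd j n) else 0) := by
    intro l
    rw [mul_smul_comm, eta_nX c cd car_dd car_cd j l a m n, smul_add, smul_smul,
      smul_mul_assoc]
    by_cases hl : l = j
    · subst hl
      simp only [and_self, if_pos, true_and, if_pos rfl]
      congr 1
      rw [mul_comm]
    · have h1 : ¬(j = l ∧ a = m) := fun h => hl h.1.symm
      have h2 : ¬(j = l ∧ a = n) := fun h => hl h.1.symm
      simp [h1, h2, hl]
  rw [Finset.mul_sum, Finset.sum_congr rfl (fun l _ => key l), Finset.sum_add_distrib,
    Finset.sum_ite_eq' Finset.univ j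
      (fun _ => (((if a = m then (1:ℂ) else 0) + (if a = n then (1:ℂ) else 0)) * (-1:ℂ)^(j:ℕ))
        • (cd j m * cd j n)),
    Finset.sum_mul]
  simp

-- commutator of a hopping-type term with η
lemma eta_hopcomm (car_dd : ∀ j k a b, cd j a * cd k b + cd k b * cd j a = 0)
    (car_cd : ∀ j k a b,
      c j a * cd k b + cd k b * c j a = if j = k ∧ a = b then 1 else 0)
    (p q : Fin L) (a m n : Fin N) :
    (cd p a * c q a) * (∑ l : Fin L, ((-1:ℂ)^(l:ℕ)) • (cd l m * cd l n))
      = (∑ l : Fin L, ((-1:ℂ)^(l:ℕ)) • (cd l m * cd l n)) * (cd p a * c q a)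
        + ((if a = m then (1:ℂ) else 0) * (-1:ℂ)^(q:ℕ)) • (cd p a * cd q n)
        - ((if a = n then (1:ℂ) else 0) * (-1:ℂ)^(q:ℕ)) • (cd p a * cd q m) := by
  have key : ∀ l : Fin L,
      (cd p a * c q a) * (((-1:ℂ)^(l:ℕ)) • (cd l m * cd l n))
      = (((-1:ℂ)^(l:ℕ)) • (cd l m * cd l n)) * (cd p a * c q a)
        + ((if l = q then ((if a = m then (1:ℂ) else 0) * (-1:ℂ)^(q:ℕ)) • (cd p a * cd q n) else 0)
          - (if l = q then ((if a = n then (1:ℂ) else 0) * (-1:ℂ)^(q:ℕ)) • (cd p a * cd q m) else 0)) := by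
    intro l
    have hmid : cd p a * ((cd l m * cd l n) * c q a)
        = ((cd l m * cd l n) * (cd p a * c q a)) := by
      rw [← mul_assoc, eta_pairD cd car_dd p l a m n, mul_assoc]
    rw [mul_smul_comm, mul_assoc, eta_cX c cd car_cd q l a m n, mul_add, mul_sub, hmid,
      mul_smul_comm, mul_smul_comm, smul_add, smul_sub, smul_smul, smul_smul, smul_mul_assoc]
    by_cases hl : l = q
    · subst hl
      by_cases ham : a = m <;> by_cases han : a = n <;>
        simp [ham, han, mul_comm] <;> abel
    · have h1 : ¬(q = l ∧ a = m) := fun h => hl h.1.symm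
      have h2 : ¬(q = l ∧ a = n) := fun h => hl h.1.symm
      simp [h1, h2, hl]
  rw [Finset.mul_sum, Finset.sum_congr rfl (fun l _ => key l), Finset.sum_add_distrib,
    Finset.sum_sub_distrib, Finset.sum_ite_eq' Finset.univ q, Finset.sum_ite_eq' Finset.univ q,
    Finset.sum_mul]
  simp [add_sub_assoc]

end

section
variable {V : Type*} [AddCommGroup V] [Module ℂ V] {L N : ℕ}
variable (c cd : Fin L → Fin N → Module.End ℂ V)

lemma eta_int_j (car_dd : ∀ j k a b, cd j a * cd k b + cd k b * cd j a = 0)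
    (car_cd : ∀ j k a b,
      c j a * cd k b + cd k b * c j a = if j = k ∧ a = b then 1 else 0)
    {m n : Fin N} (hmn : m ≠ n) (j : Fin L) :
    (∑ b : Fin N, ∑ a : Fin N, if b ≠ a then (cd j a * c j a) * (cd j b * c j b) else 0)
        * (∑ l : Fin L, ((-1:ℂ)^(l:ℕ)) • (cd l m * cd l n))
      = (∑ l : Fin L, ((-1:ℂ)^(l:ℕ)) • (cd l m * cd l n))
          * (∑ b : Fin N, ∑ a : Fin N, if b ≠ a then (cd j a * c j a) * (cd j b * c j b) else 0)
        + ((2:ℂ) * (-1:ℂ)^(j:ℕ)) • (cd j m * cd j n)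
        + ∑ a : Fin N, ((2:ℂ) * (-1:ℂ)^(j:ℕ)
              * (2 - (if a = m then (1:ℂ) else 0) - (if a = n then (1:ℂ) else 0)))
            • ((cd j m * cd j n) * (cd j a * c j a)) := by
  classical
  set E := ∑ l : Fin L, ((-1:ℂ)^(l:ℕ)) • (cd l m * cd l n) with hE
  set X := cd j m * cd j n with hX
  set s : ℂ := (-1:ℂ)^(j:ℕ) with hs
  set α : Fin N → ℂ := fun a => (if a = m then (1:ℂ) else 0) + (if a = n then (1:ℂ) else 0)
    with hα
  set Nop : Fin N → Module.End ℂ V := fun a => cd j a * c j a with hNop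
  -- single-number-operator commutation
  have hNE : ∀ a, Nop a * E = E * Nop a + (α a * s) • X :=
    fun a => eta_Ncomm c cd car_dd car_cd j a m n
  have hNX : ∀ a, Nop a * X = X * Nop a + α a • X := by
    intro a
    have := eta_nX c cd car_dd car_cd j j a m n
    simpa [hα] using this
  -- two-number-operator commutation
  have key2 : ∀ a b, (Nop a * Nop b) * E
      = E * (Nop a * Nop b) + ((α a * s) • (X * Nop b) + (α b * s) • (X * Nop a)
          + (α b * s * α a) • X) := by
    intro a b
    calc (Nop a * Nop b) * E = Nop a * (Nop b * E) := by rw [mul_assoc]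
      _ = (Nop a * E) * Nop b + (α b * s) • (Nop a * X) := by
          rw [hNE b, mul_add, mul_smul_comm, ← mul_assoc]
      _ = (E * (Nop a * Nop b) + (α a * s) • (X * Nop b))
            + ((α b * s) • (X * Nop a) + (α b * s * α a) • X) := by
          rw [hNE a, hNX a, add_mul, smul_mul_assoc, mul_assoc, smul_add, smul_smul]
      _ = _ := by abel
  -- scalar sums
  have hsumα : ∑ a : Fin N, α a = 2 := by
    simp only [hα, Finset.sum_add_distrib, Finset.sum_ite_eq', Finset.mem_univ, if_pos]
    norm_num
  have hααa : ∀ b, α b * α b = α b := by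
    intro b
    by_cases hbm : b = m <;> by_cases hbn : b = n
    · exact absurd (hbm.symm.trans hbn) hmn
    all_goals simp [hα, hbm, hbn, hmn, Ne.symm hmn]
  set NT : Module.End ℂ V := ∑ a : Fin N, Nop a with hNT
  set D : Fin N → Fin N → Module.End ℂ V := fun a b =>
    (α a * s) • (X * Nop b) + (α b * s) • (X * Nop a) + (α b * s * α a) • X with hD
  -- row sums of D
  have hrow : ∀ b, ∑ a : Fin N, D a b
      = ((2:ℂ) * s) • (X * Nop b) + (α b * s) • (X * NT) + (α b * s * 2) • X := by
    intro b
    rw [hD]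
    simp only []
    rw [Finset.sum_add_distrib, Finset.sum_add_distrib, ← Finset.sum_smul, ← Finset.sum_mul,
      hsumα, ← Finset.smul_sum, ← Finset.mul_sum, ← hNT]
    congr 1
    rw [← Finset.sum_smul]
    congr 1
    rw [← Finset.mul_sum, hsumα]
  have hG : ∑ b : Fin N, ∑ a : Fin N, D a b
      = ((4:ℂ) * s) • (X * NT) + ((4:ℂ) * s) • X := by
    rw [Finset.sum_congr rfl fun b _ => hrow b, Finset.sum_add_distrib, Finset.sum_add_distrib]
    have e1 : ∑ b : Fin N, ((2:ℂ)*s) • (X * Nop b) = ((2:ℂ)*s) • (X * NT) := by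
      rw [← Finset.smul_sum, ← Finset.mul_sum, ← hNT]
    have e2 : ∑ b : Fin N, (α b * s) • (X * NT) = ((2:ℂ)*s) • (X * NT) := by
      rw [← Finset.sum_smul, ← Finset.sum_mul, hsumα]
    have e3 : ∑ b : Fin N, (α b * s * 2) • X = ((4:ℂ)*s) • X := by
      rw [← Finset.sum_smul]
      congr 1
      rw [← Finset.sum_mul, ← Finset.sum_mul, hsumα]
      ring
    rw [e1, e2, e3, ← add_smul]
    have h4 : ((2:ℂ)*s + (2:ℂ)*s) = (4:ℂ)*s := by ring
    rw [h4]
  have hIT1 : ∑ b : Fin N, (α b * s) • (X * Nop b) = s • (X * Nop m) + s • (X * Nop n) := by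
    have p : ∀ b : Fin N, (α b * s) • (X * Nop b)
        = (if b = m then s • (X * Nop m) else 0) + (if b = n then s • (X * Nop n) else 0) := by
      intro b
      by_cases hbm : b = m <;> by_cases hbn : b = n
      · exact absurd (hbm.symm.trans hbn) hmn
      all_goals simp [hα, hbm, hbn, hmn, Ne.symm hmn, add_mul, add_smul]
    rw [Finset.sum_congr rfl fun b _ => p b, Finset.sum_add_distrib,
      Finset.sum_ite_eq' Finset.univ m, Finset.sum_ite_eq' Finset.univ n]
    simp
  have hIT2 : ∑ b : Fin N, (α b * s * α b) • X = ((2:ℂ) * s) • X := by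
    rw [← Finset.sum_smul]
    congr 1
    have p : ∀ b : Fin N, α b * s * α b = α b * s := by
      intro b
      rw [mul_right_comm, hααa]
    rw [Finset.sum_congr rfl fun b _ => p b, ← Finset.sum_mul, hsumα]
  have hDiag : ∑ b : Fin N, D b b
      = (s • (X * Nop m) + s • (X * Nop n)) + (s • (X * Nop m) + s • (X * Nop n))
        + ((2:ℂ) * s) • X := by
    rw [hD]
    simp only []
    rw [Finset.sum_add_distrib, Finset.sum_add_distrib, hIT1, hIT2]
  have hT : ∑ a : Fin N, ((2:ℂ) * s
        * (2 - (if a = m then (1:ℂ) else 0) - (if a = n then (1:ℂ) else 0))) • (X * Nop a)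
      = ((4:ℂ) * s) • (X * NT) - ((2:ℂ) * s) • (X * Nop m) - ((2:ℂ) * s) • (X * Nop n) := by
    have p : ∀ a : Fin N, ((2:ℂ) * s
          * (2 - (if a = m then (1:ℂ) else 0) - (if a = n then (1:ℂ) else 0))) • (X * Nop a)
        = ((4:ℂ) * s) • (X * Nop a)
          - (if a = m then ((2:ℂ) * s) • (X * Nop m) else 0)
          - (if a = n then ((2:ℂ) * s) • (X * Nop n) else 0) := by
      intro a
      by_cases ham : a = m <;> by_cases han : a = n
      · exact absurd (ham.symm.trans han) hmn
      all_goals simp [ham, han, hmn, Ne.symm hmn]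
      all_goals module
    rw [Finset.sum_congr rfl fun a _ => p a, Finset.sum_sub_distrib, Finset.sum_sub_distrib,
      Finset.sum_ite_eq' Finset.univ m, Finset.sum_ite_eq' Finset.univ n,
      ← Finset.smul_sum, ← Finset.mul_sum, ← hNT]
    simp
  show (∑ b : Fin N, ∑ a : Fin N, if b ≠ a then Nop a * Nop b else 0) * E
      = E * (∑ b : Fin N, ∑ a : Fin N, if b ≠ a then Nop a * Nop b else 0)
        + ((2:ℂ) * s) • X
        + ∑ a : Fin N, ((2:ℂ) * s
            * (2 - (if a = m then (1:ℂ) else 0) - (if a = n then (1:ℂ) else 0))) • (X * Nop a)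
  have hL1 : (∑ b : Fin N, ∑ a : Fin N, if b ≠ a then Nop a * Nop b else 0) * E
      = ∑ b : Fin N, ∑ a : Fin N, (if b ≠ a then (Nop a * Nop b) * E else 0) := by
    rw [Finset.sum_mul]
    exact Finset.sum_congr rfl fun b _ => by
      rw [Finset.sum_mul]
      exact Finset.sum_congr rfl fun a _ => by rw [ite_mul, zero_mul]
  have hE1 : E * (∑ b : Fin N, ∑ a : Fin N, if b ≠ a then Nop a * Nop b else 0)
      = ∑ b : Fin N, ∑ a : Fin N, (if b ≠ a then E * (Nop a * Nop b) else 0) := by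
    simp only [Finset.mul_sum, mul_ite, mul_zero]
  have hsplit : ∀ b a : Fin N, (if b ≠ a then (Nop a * Nop b) * E else 0)
      = (if b ≠ a then E * (Nop a * Nop b) else 0)
        + (D a b - if b = a then D a b else 0) := by
    intro b a
    by_cases h : b = a
    · simp [h]
    · rw [if_pos h, if_pos h, if_neg h, sub_zero, key2 a b, hD]
  have hL2 : ∑ b : Fin N, ∑ a : Fin N, (if b = a then D a b else 0) = ∑ b : Fin N, D b b := by
    refine Finset.sum_congr rfl fun b _ => ?_
    rw [Finset.sum_ite_eq Finset.univ b (fun a => D a b)]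
    simp
  rw [hL1, Finset.sum_congr rfl fun b _ => Finset.sum_congr rfl fun a _ => hsplit b a]
  rw [Finset.sum_congr rfl fun b _ => Finset.sum_add_distrib, Finset.sum_add_distrib,
    Finset.sum_congr rfl fun b _ => Finset.sum_sub_distrib _ _, Finset.sum_sub_distrib,
    hL2, hG, hDiag, hT, ← hE1]
  module

end

section
variable {V : Type*} [AddCommGroup V] [Module ℂ V] {L N : ℕ}
variable (c cd : Fin L → Fin N → Module.End ℂ V)

-- pairs of creation operators commute with each other
lemma eta_pairpair (car_dd : ∀ j k a b, cd j a * cd k b + cd k b * cd j a = 0)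
    (p l : Fin L) (q r m n : Fin N) :
    (cd p q * cd p r) * (cd l m * cd l n) = (cd l m * cd l n) * (cd p q * cd p r) := by
  rw [mul_assoc, eta_pairD cd car_dd p l r m n, ← mul_assoc,
    eta_pairD cd car_dd p l q m n, mul_assoc]

lemma eta_Wm0 (car_dd : ∀ j k a b, cd j a * cd k b + cd k b * cd j a = 0)
    (j : Fin L) (m n a : Fin N) :
    ((cd j m * cd j n) * cd j a) * cd j m = 0 := by
  rw [mul_assoc, eta_hdd cd car_dd j j a m, mul_neg, ← mul_assoc,
    show (cd j m * cd j n) * cd j m = cd j m * (cd j m * cd j n) from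
      (eta_pairD cd car_dd j j m m n).symm,
    ← mul_assoc, eta_hdd0 cd car_dd j m]
  simp

-- the residual operator vanishes as an operator when a = m
lemma eta_O0 (car_dd : ∀ j k a b, cd j a * cd k b + cd k b * cd j a = 0)
    (j : Fin L) (m n : Fin N) :
    (cd j m * cd j n) * (cd j m * c j m) = 0 := by
  rw [← mul_assoc,
    show (cd j m * cd j n) * cd j m = cd j m * (cd j m * cd j n) from
      (eta_pairD cd car_dd j j m m n).symm,
    ← mul_assoc, eta_hdd0 cd car_dd j m]
  simp

-- the residual operator commutes with η for a ≠ m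
lemma eta_Ocomm (car_dd : ∀ j k a b, cd j a * cd k b + cd k b * cd j a = 0)
    (car_cd : ∀ j k a b,
      c j a * cd k b + cd k b * c j a = if j = k ∧ a = b then 1 else 0)
    (j : Fin L) {m a : Fin N} (n n' : Fin N) (ham : a ≠ m) :
    ((cd j m * cd j n) * (cd j a * c j a)) * (∑ l : Fin L, ((-1:ℂ)^(l:ℕ)) • (cd l m * cd l n'))
      = (∑ l : Fin L, ((-1:ℂ)^(l:ℕ)) • (cd l m * cd l n'))
          * ((cd j m * cd j n) * (cd j a * c j a)) := by
  have key : ∀ l : Fin L,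
      ((cd j m * cd j n) * (cd j a * c j a)) * (((-1:ℂ)^(l:ℕ)) • (cd l m * cd l n'))
      = (((-1:ℂ)^(l:ℕ)) • (cd l m * cd l n')) * ((cd j m * cd j n) * (cd j a * c j a)) := by
    intro l
    rw [mul_smul_comm, smul_mul_assoc]
    congr 1
    have hW : ((cd j m * cd j n) * (cd j a * c j a)) * (cd l m * cd l n')
        = (((cd j m * cd j n) * cd j a) * (c j a * (cd l m * cd l n'))) := by
      noncomm_ring
    rw [hW, eta_cX c cd car_cd j l a m n', mul_add, mul_sub]
    have h1 : ¬(j = l ∧ a = m) := fun h => ham h.2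
    rw [if_neg h1, zero_smul, mul_zero, zero_sub]
    have h2 : ((cd j m * cd j n) * cd j a) *
        ((if j = l ∧ a = n' then (1:ℂ) else 0) • cd l m) = 0 := by
      by_cases h : j = l ∧ a = n'
      · obtain ⟨rfl, rfl⟩ := h
        rw [if_pos ⟨rfl, rfl⟩, one_smul, eta_Wm0 cd car_dd j m n a]
      · rw [if_neg h, zero_smul, mul_zero]
    rw [h2, neg_zero, zero_add, ← mul_assoc]
    have h3 : ((cd j m * cd j n) * cd j a) * (cd l m * cd l n')
        = (cd l m * cd l n') * ((cd j m * cd j n) * cd j a) := by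
      rw [mul_assoc, eta_pairD cd car_dd j l a m n', ← mul_assoc,
        eta_pairpair cd car_dd j l m n m n', mul_assoc]
    rw [h3]
    noncomm_ring
  rw [Finset.mul_sum, Finset.sum_congr rfl fun l _ => key l, Finset.sum_mul]

-- hopping term commutes with η, per site
lemma eta_hop_j [NeZero L] (hL : Even L)
    (car_dd : ∀ j k a b, cd j a * cd k b + cd k b * cd j a = 0)
    (car_cd : ∀ j k a b,
      c j a * cd k b + cd k b * c j a = if j = k ∧ a = b then 1 else 0)
    {m n : Fin N} (hmn : m ≠ n) (j : Fin L) :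
    (∑ a : Fin N, (cd j a * c (j+1) a + cd (j+1) a * c j a))
        * (∑ l : Fin L, ((-1:ℂ)^(l:ℕ)) • (cd l m * cd l n))
      = (∑ l : Fin L, ((-1:ℂ)^(l:ℕ)) • (cd l m * cd l n))
          * (∑ a : Fin N, (cd j a * c (j+1) a + cd (j+1) a * c j a)) := by
  classical
  have key : ∀ a : Fin N,
      (cd j a * c (j+1) a + cd (j+1) a * c j a)
          * (∑ l : Fin L, ((-1:ℂ)^(l:ℕ)) • (cd l m * cd l n))
      = (∑ l : Fin L, ((-1:ℂ)^(l:ℕ)) • (cd l m * cd l n))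
            * (cd j a * c (j+1) a + cd (j+1) a * c j a)
        + ((if a = m then
              ((-1:ℂ)^(((j+1 : Fin L)):ℕ)) • (cd j m * cd (j+1) n)
                + ((-1:ℂ)^((j:ℕ))) • (cd (j+1) m * cd j n) else 0)
          + (if a = n then
              -(((-1:ℂ)^(((j+1 : Fin L)):ℕ)) • (cd j n * cd (j+1) m))
                - ((-1:ℂ)^((j:ℕ))) • (cd (j+1) n * cd j m) else 0)) := by
    intro a
    rw [add_mul, eta_hopcomm c cd car_dd car_cd j (j+1) a m n,
      eta_hopcomm c cd car_dd car_cd (j+1) j a m n, mul_add]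
    by_cases ham : a = m <;> by_cases han : a = n
    · exact absurd (ham.symm.trans han) hmn
    · subst ham
      simp [if_neg han]
      abel
    · subst han
      simp [if_neg ham]
      abel
    · simp only [if_neg ham, if_neg han, zero_mul, zero_smul, sub_zero, add_zero]
  have hw : (((-1:ℂ)^(((j+1 : Fin L)):ℕ)) • (cd j m * cd (j+1) n)
        + ((-1:ℂ)^((j:ℕ))) • (cd (j+1) m * cd j n))
      + (-(((-1:ℂ)^(((j+1 : Fin L)):ℕ)) • (cd j n * cd (j+1) m))
        - ((-1:ℂ)^((j:ℕ))) • (cd (j+1) n * cd j m)) = 0 := by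
    rw [eta_sign hL j, eta_hdd cd car_dd (j+1) j m n, eta_hdd cd car_dd (j+1) j n m]
    module
  rw [Finset.sum_mul, Finset.sum_congr rfl fun a _ => key a, Finset.sum_add_distrib,
    Finset.sum_add_distrib, Finset.sum_ite_eq' Finset.univ m, Finset.sum_ite_eq' Finset.univ n,
    ← Finset.mul_sum]
  simp only [Finset.mem_univ, if_pos, ite_true]
  rw [hw, add_zero]

end


/-- η-pairing algebra in the SU(N) Hubbard model.  Fermionic operators
`c`/`cd` satisfy the canonical anticommutation relations on `L` sites
(periodic boundary conditions, `L` even) with `N ≥ 2` flavors; `vac` is the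
Fock vacuum.  With `η†_{mn} = Σ_j (−1)^j c†_{j,m} c†_{j,n}`, the hopping term
commutes with every `η†_{mn}`, the interaction commutator equals
`U η†_{mn}` plus terms annihilating the vacuum, and consequently
`[H, η†_{1n}]` acting on any tower state `Π_{n'} (η†_{1n'})^{m_{n'}} |vac⟩`
equals `U η†_{1n}` applied to that state. -/
theorem eta_pairing_commutators {V : Type*} [AddCommGroup V] [Module ℂ V]
    (L N : ℕ) [NeZero L] [NeZero N] (hL : Even L) (hN : 2 ≤ N)
    (c cd : Fin L → Fin N → Module.End ℂ V)
    (car_cc : ∀ j k a b, c j a * c k b + c k b * c j a = 0)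
    (car_dd : ∀ j k a b, cd j a * cd k b + cd k b * cd j a = 0)
    (car_cd : ∀ j k a b,
      c j a * cd k b + cd k b * c j a = if j = k ∧ a = b then 1 else 0)
    (vac : V) (hvac : ∀ j a, (c j a) vac = 0)
    (J U : ℝ)
    (η : Fin N → Fin N → Module.End ℂ V)
    (hη : ∀ m n, η m n = ∑ j : Fin L, ((-1 : ℂ) ^ (j : ℕ)) • (cd j m * cd j n))
    (Hhop Hint : Module.End ℂ V)
    (hHhop : Hhop =
      (-(J : ℂ)) • ∑ j : Fin L, ∑ n : Fin N,
        (cd j n * c (j + 1) n + cd (j + 1) n * c j n))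
    (hHint : Hint =
      ((U : ℂ) / 2) • ∑ j : Fin L, ∑ n : Fin N, ∑ m : Fin N,
        if n ≠ m then (cd j m * c j m) * (cd j n * c j n) else 0) :
    (∀ m n : Fin N, m ≠ n → ⁅Hhop, η m n⁆ = 0) ∧
    (∀ m n : Fin N, m ≠ n → ∃ R : Module.End ℂ V,
      ⁅Hint, η m n⁆ = (U : ℂ) • η m n + R ∧ R vac = 0) ∧
    (∀ n : Fin N, n ≠ 0 → ∀ mvec : Fin N → ℕ, mvec 0 = 0 →
      ⁅Hhop + Hint, η 0 n⁆
          ((List.ofFn fun n' => η 0 n' ^ mvec n').prod vac) =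
        (U : ℂ) •
          (η 0 n) ((List.ofFn fun n' => η 0 n' ^ mvec n').prod vac)) := by

  classical
  have part1 : ∀ m n : Fin N, m ≠ n → ⁅Hhop, η m n⁆ = 0 := by
    intro m n hmn
    rw [Ring.lie_def, hHhop, hη m n, smul_mul_assoc, mul_smul_comm, Finset.sum_mul,
      Finset.mul_sum,
      Finset.sum_congr rfl fun j _ => eta_hop_j c cd hL car_dd car_cd hmn j]
    exact sub_self _
  have part2 : ∀ m n : Fin N, m ≠ n → ⁅Hint, η m n⁆
      = (U:ℂ) • η m n + ((U:ℂ)/2) • (∑ j : Fin L, ∑ a : Fin N,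
          ((2:ℂ) * (-1:ℂ)^(j:ℕ)
              * (2 - (if a = m then (1:ℂ) else 0) - (if a = n then (1:ℂ) else 0)))
            • ((cd j m * cd j n) * (cd j a * c j a))) := by
    intro m n hmn
    rw [Ring.lie_def, hHint, hη m n, smul_mul_assoc, mul_smul_comm, ← smul_sub]
    have hj : ∀ j : Fin L,
        (∑ b : Fin N, ∑ a : Fin N, if b ≠ a then (cd j a * c j a) * (cd j b * c j b) else 0)
            * (∑ l : Fin L, ((-1:ℂ)^(l:ℕ)) • (cd l m * cd l n))
          - (∑ l : Fin L, ((-1:ℂ)^(l:ℕ)) • (cd l m * cd l n))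
            * (∑ b : Fin N, ∑ a : Fin N, if b ≠ a then (cd j a * c j a) * (cd j b * c j b) else 0)
        = ((2:ℂ) * (-1:ℂ)^(j:ℕ)) • (cd j m * cd j n)
          + ∑ a : Fin N, ((2:ℂ) * (-1:ℂ)^(j:ℕ)
              * (2 - (if a = m then (1:ℂ) else 0) - (if a = n then (1:ℂ) else 0)))
            • ((cd j m * cd j n) * (cd j a * c j a)) := by
      intro j
      rw [eta_int_j c cd car_dd car_cd hmn j]
      abel
    rw [Finset.sum_mul, Finset.mul_sum, ← Finset.sum_sub_distrib,
      Finset.sum_congr rfl fun j _ => hj j, Finset.sum_add_distrib]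
    have h2E : ∑ x : Fin L, ((2:ℂ) * (-1:ℂ)^(x:ℕ)) • (cd x m * cd x n)
        = (2:ℂ) • ∑ x : Fin L, ((-1:ℂ)^(x:ℕ)) • (cd x m * cd x n) := by
      rw [Finset.smul_sum]
      exact Finset.sum_congr rfl fun x _ => mul_smul (2:ℂ) ((-1:ℂ)^(x:ℕ)) (cd x m * cd x n)
    rw [h2E, smul_add, smul_smul, show ((U:ℂ)/2) * 2 = (U:ℂ) from by ring]
  refine ⟨part1, fun m n hmn => ⟨_, part2 m n hmn, ?_⟩, ?_⟩
  · -- R vac = 0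
    have hO : ∀ (j : Fin L) (a : Fin N),
        (((cd j m * cd j n) * (cd j a * c j a))) vac = 0 := by
      intro j a
      simp [Module.End.mul_apply, hvac]
    simp only [LinearMap.smul_apply, LinearMap.coe_sum, Finset.sum_apply,
      LinearMap.smul_apply, hO, smul_zero, Finset.sum_const_zero]
  · -- part 3
    intro n hn mvec hm0
    have h0n : (0 : Fin N) ≠ n := Ne.symm hn
    set P := (List.ofFn fun n' => η 0 n' ^ mvec n').prod with hP
    have commP : ∀ A : Module.End ℂ V,
        (∀ n' : Fin N, n' ≠ 0 → Commute A (η 0 n')) → Commute A P := by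
      intro A hA
      apply Commute.list_prod_right
      intro y hy
      rw [List.mem_ofFn] at hy
      obtain ⟨i, rfl⟩ := hy
      by_cases hi : i = 0
      · subst hi
        show Commute A (η 0 0 ^ mvec 0)
        rw [hm0, pow_zero]
        exact Commute.one_right A
      · exact (hA i hi).pow_right _
    have hOP : ∀ (j : Fin L) (a : Fin N),
        (((cd j 0 * cd j n) * (cd j a * c j a))) (P vac) = 0 := by
      intro j a
      by_cases ha : a = 0
      · subst ha
        rw [eta_O0 c cd car_dd j 0 n]
        simp
      · have hOvac : (((cd j 0 * cd j n) * (cd j a * c j a))) vac = 0 := by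
          simp [Module.End.mul_apply, hvac]
        have hcomm : Commute ((cd j 0 * cd j n) * (cd j a * c j a)) P := by
          apply commP
          intro n' _
          have := eta_Ocomm c cd car_dd car_cd j n n' ha
          rw [hη 0 n']
          exact this
        calc (((cd j 0 * cd j n) * (cd j a * c j a))) (P vac)
            = ((((cd j 0 * cd j n) * (cd j a * c j a))) * P) vac := rfl
          _ = (P * (((cd j 0 * cd j n) * (cd j a * c j a)))) vac := by rw [hcomm.eq]
          _ = P ((((cd j 0 * cd j n) * (cd j a * c j a))) vac) := rfl
          _ = 0 := by rw [hOvac, map_zero]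
    rw [show ⁅Hhop + Hint, η 0 n⁆ = ⁅Hhop, η 0 n⁆ + ⁅Hint, η 0 n⁆ from by rw [Ring.lie_def, Ring.lie_def, Ring.lie_def, add_mul, mul_add]; abel, part1 0 n h0n, zero_add, part2 0 n h0n, LinearMap.add_apply,
      LinearMap.smul_apply]
    have hR0 : ((((U:ℂ)/2) • (∑ j : Fin L, ∑ a : Fin N,
        ((2:ℂ) * (-1:ℂ)^(j:ℕ)
            * (2 - (if a = (0:Fin N) then (1:ℂ) else 0) - (if a = n then (1:ℂ) else 0)))
          • ((cd j 0 * cd j n) * (cd j a * c j a))))) (P vac) = 0 := by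
      simp only [LinearMap.smul_apply, LinearMap.coe_sum, Finset.sum_apply,
        LinearMap.smul_apply, hOP, smul_zero, Finset.sum_const_zero]
    rw [hR0, add_zero]
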